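/- arXiv:1001.2291 — 2 statements merged into one kernel-verified Lean document; each statement's English description precedes it below -/
import Mathlib

section
/- Let Γ be a finite right-resolving labeled graph over a finite alphabet X and let μ_p be a Bernoulli measure on X^{-ω} with all letter probabilities strictly positive. Then the set O of left-infinite sequences w with |V(w)| = min_{u ∈ X*} |V(u)| is open and dense in X^{-ω} and has μ_p-measure 1. -/
open MeasureTheory ENNReal

/-- The left-infinite sequence `w = ...x₂x₁` (with `w 0 = x₁` the rightmost letter)
ends at the vertex `v` of the `X`-labeled directed graph with edge relation `E`:
there is a left-infinite path `...e₂e₁` ending at `v` whose `i`-th edge is labeled `xᵢ`. -/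
def EndsInf {V X : Type*} (E : V → X → V → Prop) (w : ℕ → X) (v : V) : Prop :=
  ∃ p : ℕ → V, p 0 = v ∧ ∀ i : ℕ, E (p (i + 1)) (w i) (p i)

/-- The finite word `u = xₙ...x₂x₁` (encoded as the list `[x₁, x₂, ..., xₙ]`, head = rightmost
letter) ends at the vertex `v`: some finite path ending at `v` is labeled by `u`. -/
def EndsFin {V X : Type*} (E : V → X → V → Prop) (u : List X) (v : V) : Prop :=
  ∃ p : ℕ → V, p 0 = v ∧ ∀ (i : ℕ) (h : i < u.length), E (p (i + 1)) (u.get ⟨i, h⟩) (p i)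

/-- The right-infinite sequence `w = x₁x₂...` (with `w 0 = x₁` the first letter) starts at the
vertex `v`: there is a right-infinite path starting at `v` labeled by `w`. -/
def StartsInf {V X : Type*} (E : V → X → V → Prop) (w : ℕ → X) (v : V) : Prop :=
  ∃ p : ℕ → V, p 0 = v ∧ ∀ i : ℕ, E (p i) (w i) (p (i + 1))

/-- The graph is right-resolving: the outgoing edges at each vertex have distinct labels. -/
def RightResolving {V X : Type*} (E : V → X → V → Prop) : Prop :=
  ∀ v x u u', E v x u → E v x u' → u = u'

/-- The cylinder subset of `X^{-ω}` (resp. `X^ω`) of sequences whose last (resp. first)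
`u.length` letters spell the word `u`. -/
def Cyl {X : Type*} (u : List X) : Set (ℕ → X) :=
  {w | ∀ (i : ℕ) (h : i < u.length), w i = u.get ⟨i, h⟩}

section Aux
variable {V X : Type*} (E : V → X → V → Prop)

private def Phi (x : X) (A : Set V) : Set V := {v | ∃ q ∈ A, E q x v}

private lemma endsFin_cons (x : X) (t : List X) :
    {v | EndsFin E (x :: t) v} = Phi E x {v | EndsFin E t v} := by
  ext v
  constructor
  · rintro ⟨p, rfl, h⟩
    refine ⟨p 1, ⟨fun i => p (i + 1), rfl, fun i hi => ?_⟩, ?_⟩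
    · have := h (i + 1) (by simpa using hi)
      simpa using this
    · have := h 0 (by simp)
      simpa using this
  · rintro ⟨q, ⟨p', hp0, hp⟩, hE⟩
    refine ⟨fun n => Nat.casesOn n v p', rfl, ?_⟩
    intro i hi
    cases i with
    | zero => simpa [hp0] using hE
    | succ i => simpa using hp i (by simpa using hi)

private lemma ncard_phi_le [Finite V] (hrr : RightResolving E) (x : X) (A : Set V) :
    (Phi E x A).ncard ≤ A.ncard := by
  classical
  set f : V → V := fun v => if h : ∃ q ∈ A, E q x v then h.choose else v with hf
  have hfs : ∀ v, v ∈ Phi E x A → f v ∈ A ∧ E (f v) x v := by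
    intro v hv
    have h : ∃ q ∈ A, E q x v := hv
    simp only [hf, dif_pos h]
    exact ⟨h.choose_spec.1, h.choose_spec.2⟩
  refine Set.ncard_le_ncard_of_injOn f (fun v hv => (hfs v hv).1) ?_ (Set.toFinite A)
  intro v hv v' hv' hee
  exact hrr _ _ _ _ (hfs v hv).2 (by rw [hee]; exact (hfs v' hv').2)

private lemma endsFin_prefix_mono {w : ℕ → X} {m n : ℕ} (hmn : m ≤ n) {v : V}
    (h : EndsFin E ((List.range n).map w) v) : EndsFin E ((List.range m).map w) v := by
  obtain ⟨p, hp0, hp⟩ := h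
  refine ⟨p, hp0, fun i hi => ?_⟩
  have hi' : i < ((List.range n).map w).length := by
    simpa using lt_of_lt_of_le (by simpa using hi) hmn
  have := hp i hi'
  simpa using this

private lemma exists_stab [Finite V] (w : ℕ → X) :
    ∃ N : ℕ, ∀ n, N ≤ n →
      {v | EndsFin E ((List.range n).map w) v} = {v | EndsInf E w v} := by
  set F : ℕ → ℕ → Set V :=
    fun k n => {v | EndsFin E ((List.range n).map fun i => w (i + k)) v} with hF
  have hmono : ∀ (k) {m n}, m ≤ n → F k n ⊆ F k m := fun k m n hmn v hv =>
    endsFin_prefix_mono E hmn hv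
  have hstab : ∀ k, ∃ N, ∀ n, N ≤ n → F k n = F k N := by
    intro k
    have hne : (Set.range fun n => (F k n).ncard).Nonempty := ⟨_, ⟨0, rfl⟩⟩
    obtain ⟨N, hN⟩ := Nat.sInf_mem hne
    refine ⟨N, fun n hn => Set.eq_of_subset_of_ncard_le (hmono k hn) ?_ (Set.toFinite _)⟩
    have hmem : (F k n).ncard ∈ Set.range fun n => (F k n).ncard := ⟨n, rfl⟩
    have := Nat.sInf_le hmem
    simpa [← hN] using this
  choose N hN using hstab
  have hrec : ∀ k n, F k (n + 1) = Phi E (w k) (F (k + 1) n) := by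
    intro k n
    have hlist : (List.range (n + 1)).map (fun i => w (i + k))
        = w k :: (List.range n).map (fun i => w (i + (k + 1))) := by
      rw [List.range_succ_eq_map, List.map_cons, List.map_map]
      have h0 : w (0 + k) = w k := by rw [Nat.zero_add]
      have hfun : (fun i => w (i + k)) ∘ Nat.succ = fun i => w (i + (k + 1)) := by
        funext i
        show w (i + 1 + k) = w (i + (k + 1))
        congr 1
        omega
      rw [hfun, h0]
    simp only [hF, hlist]
    exact endsFin_cons E (w k) _
  have hT : ∀ k, F k (N k) = Phi E (w k) (F (k + 1) (N (k + 1))) := by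
    intro k
    set n := max (N k) (N (k + 1)) with hn
    calc F k (N k) = F k (n + 1) :=
          (hN k (n + 1) (le_trans (le_max_left _ _) (Nat.le_succ n))).symm
      _ = Phi E (w k) (F (k + 1) n) := hrec k n
      _ = Phi E (w k) (F (k + 1) (N (k + 1))) := by rw [hN (k + 1) n (le_max_right _ _)]
  have hfwd : ∀ v, v ∈ F 0 (N 0) → EndsInf E w v := by
    intro v hv
    have hstep : ∀ (k) (q : V), q ∈ F k (N k) →
        ∃ q', q' ∈ F (k + 1) (N (k + 1)) ∧ E q' (w k) q := by
      intro k q hq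
      rw [hT k] at hq
      obtain ⟨q', h1, h2⟩ := hq
      exact ⟨q', h1, h2⟩
    let f : ∀ k : ℕ, {q : V // q ∈ F k (N k)} := fun k =>
      Nat.rec ⟨v, hv⟩
        (fun k ih => ⟨(hstep k ih.1 ih.2).choose, (hstep k ih.1 ih.2).choose_spec.1⟩) k
    exact ⟨fun k => (f k).1, rfl, fun k => (hstep k (f k).1 (f k).2).choose_spec.2⟩
  have hbwd : ∀ n v, EndsInf E w v → v ∈ F 0 n := by
    rintro n v ⟨p, hp0, hp⟩
    refine ⟨p, hp0, fun i hi => ?_⟩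
    have := hp i
    simpa using this
  refine ⟨N 0, fun n hn => ?_⟩
  have hFw : {v | EndsFin E ((List.range n).map w) v} = F 0 n := by
    simp only [hF, Nat.add_zero]
  rw [hFw, hN 0 n hn]
  exact Set.Subset.antisymm (fun v hv => hfwd v hv) (fun v hv => hbwd (N 0) v hv)

private lemma ncard_endsFin_append_le [Finite V] (hrr : RightResolving E) (s u : List X) :
    {v | EndsFin E (s ++ u) v}.ncard ≤ {v | EndsFin E u v}.ncard := by
  induction s with
  | nil => simp
  | cons x s ih =>
    rw [List.cons_append, endsFin_cons]
    exact le_trans (ncard_phi_le E hrr _ _) ih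

end Aux

private lemma isOpen_cyl {X : Type*} [TopologicalSpace X] [DiscreteTopology X] (u : List X) :
    IsOpen (Cyl u) := by
  have h : Cyl u = ⋂ i : Fin u.length, (fun w : ℕ → X => w i) ⁻¹' {u.get i} := by
    ext w
    simp only [Cyl, Set.mem_setOf_eq, Set.mem_iInter, Set.mem_preimage, Set.mem_singleton_iff]
    exact ⟨fun h i => h i i.2, fun h i hi => h ⟨i, hi⟩⟩
  rw [h]
  exact isOpen_iInter_of_finite fun i =>
    (continuous_apply (i : ℕ)).isOpen_preimage _ (isOpen_discrete _)

private lemma flatten_ofFn_blocks {X : Type*} (L : ℕ) :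
    ∀ (n : ℕ) (w : ℕ → X),
      (List.ofFn fun j : Fin n => List.ofFn fun i : Fin L => w ((j : ℕ) * L + (i : ℕ))).flatten
        = (List.range (n * L)).map w := by
  intro n
  induction n with
  | zero => intro w; simp
  | succ n ih =>
    intro w
    rw [List.ofFn_succ, List.flatten_cons]
    have h1 : (List.ofFn fun i : Fin L => w (((0 : Fin (n+1)) : ℕ) * L + (i : ℕ)))
        = (List.range L).map w := by
      apply List.ext_getElem <;> simp
    have h2 : (List.ofFn fun j : Fin n =>
          List.ofFn fun i : Fin L => w (((Fin.succ j : Fin (n+1)) : ℕ) * L + (i : ℕ)))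
        = List.ofFn fun j : Fin n =>
          List.ofFn fun i : Fin L => (fun k => w (L + k)) ((j : ℕ) * L + (i : ℕ)) := by
      congr 1
      funext j
      congr 1
      funext i
      congr 1
      rw [Fin.val_succ]
      ring
    rw [h1, h2, ih (fun k => w (L + k))]
    have h3 : (n + 1) * L = L + n * L := by ring
    rw [h3, List.range_add, List.map_append, List.map_map]
    rfl

private lemma prod_map_flatten {X : Type*} (p : X → ℝ≥0∞) {n L : ℕ} (g : Fin n → Fin L → X) :
    (((List.ofFn fun j : Fin n => List.ofFn fun i : Fin L => g j i).flatten).map p).prod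
      = ∏ j, ∏ i, p (g j i) := by
  rw [List.map_flatten, List.map_ofFn, List.prod_flatten, List.map_ofFn, List.prod_ofFn]
  refine Finset.prod_congr rfl fun j _ => ?_
  simp [List.map_ofFn, List.prod_ofFn, Function.comp]


/-- For a finite right-resolving labeled graph and a Bernoulli measure `μ` on `X^{-ω}` with
strictly positive letter probabilities `p`, the set `O` of left-infinite sequences `w` with
`|V(w)| = min_{u ∈ X*} |V(u)|` is open, dense, and has measure `1`. -/
theorem stmt_4 {V X : Type*} [Finite V] [Fintype X] [Nonempty X]
    [TopologicalSpace X] [DiscreteTopology X] [MeasurableSpace X]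
    (E : V → X → V → Prop) (hrr : RightResolving E)
    (p : X → ℝ≥0∞) (hp : ∀ x, p x ≠ 0) (hp1 : ∑ x, p x = 1)
    (μ : Measure (ℕ → X)) (hμ : ∀ u : List X, μ (Cyl u) = (u.map p).prod) :
    IsOpen {w : ℕ → X | {v | EndsInf E w v}.ncard =
        sInf {k : ℕ | ∃ u : List X, {v | EndsFin E u v}.ncard = k}} ∧
    Dense {w : ℕ → X | {v | EndsInf E w v}.ncard =
        sInf {k : ℕ | ∃ u : List X, {v | EndsFin E u v}.ncard = k}} ∧
    μ {w : ℕ → X | {v | EndsInf E w v}.ncard =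
        sInf {k : ℕ | ∃ u : List X, {v | EndsFin E u v}.ncard = k}} = 1 := by
  classical
  set m : ℕ := sInf {k : ℕ | ∃ u : List X, {v | EndsFin E u v}.ncard = k} with hm
  set O : Set (ℕ → X) := {w | {v | EndsInf E w v}.ncard = m} with hO
  have hSne : {k : ℕ | ∃ u : List X, {v | EndsFin E u v}.ncard = k}.Nonempty :=
    ⟨_, ⟨[], rfl⟩⟩
  obtain ⟨u₀, hu₀⟩ : ∃ u : List X, {v | EndsFin E u v}.ncard = m := Nat.sInf_mem hSne
  have hmin : ∀ u : List X, m ≤ {v | EndsFin E u v}.ncard := fun u => Nat.sInf_le ⟨u, rfl⟩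
  have happ : ∀ s : List X, {v | EndsFin E (s ++ u₀) v}.ncard = m :=
    fun s => le_antisymm (hu₀ ▸ ncard_endsFin_append_le E hrr s u₀) (hmin _)
  -- minimal cylinders sit inside O
  have Hcyl : ∀ u : List X, {v | EndsFin E u v}.ncard = m → Cyl u ⊆ O := by
    intro u hu w hw
    obtain ⟨N, hN⟩ := exists_stab E w
    set n := max N u.length with hn
    have h1 : {v | EndsFin E ((List.range n).map w) v} = {v | EndsInf E w v} :=
      hN n (le_max_left _ _)
    have h2 : {v | EndsFin E ((List.range n).map w) v} ⊆ {v | EndsFin E u v} := by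
      rintro v ⟨q, hq0, hq⟩
      refine ⟨q, hq0, fun i hi => ?_⟩
      have hi' : i < ((List.range n).map w).length := by
        simp only [List.length_map, List.length_range]
        exact lt_of_lt_of_le hi (le_max_right _ _)
      have hthis := hq i hi'
      have hget : ((List.range n).map w).get ⟨i, hi'⟩ = w i := by simp
      rw [hget] at hthis
      rwa [← hw i hi]
    have hle : {v | EndsInf E w v}.ncard ≤ m := by
      rw [← h1, ← hu]
      exact Set.ncard_le_ncard h2 (Set.toFinite _)
    have hge : m ≤ {v | EndsInf E w v}.ncard := by
      rw [← h1]; exact hmin _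
    exact le_antisymm hle hge
  have Hmem : ∀ w ∈ O, ∃ u : List X, {v | EndsFin E u v}.ncard = m ∧ w ∈ Cyl u := by
    intro w hw
    obtain ⟨N, hN⟩ := exists_stab E w
    refine ⟨(List.range N).map w, ?_, ?_⟩
    · rw [hN N le_rfl]; exact hw
    · intro i hi; simp
  -- openness
  have hOopen : IsOpen O := by
    have h : O = ⋃ u ∈ {u : List X | {v | EndsFin E u v}.ncard = m}, Cyl u := by
      apply Set.Subset.antisymm
      · intro w hw
        obtain ⟨u, hu, hwu⟩ := Hmem w hw
        exact Set.mem_biUnion hu hwu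
      · intro w hw
        obtain ⟨u, hu, hwu⟩ := Set.mem_iUnion₂.1 hw
        exact Hcyl u hu hwu
    rw [h]
    exact isOpen_biUnion fun u _ => isOpen_cyl u
  -- density
  have hOdense : Dense O := by
    rw [dense_iff_inter_open]
    rintro U hU ⟨w, hw⟩
    obtain ⟨I, t, h1, h2⟩ := isOpen_pi_iff.1 hU w hw
    set n : ℕ := if h : I.Nonempty then I.max' h + 1 else 0 with hn
    have hIlt : ∀ i ∈ I, i < n := by
      intro i hi
      rw [hn, dif_pos ⟨i, hi⟩]
      exact Nat.lt_succ_of_le (Finset.le_max' I i hi)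
    set u' : List X := (List.range n).map w ++ u₀ with hu'
    have hlen : u'.length = n + u₀.length := by
      simp [hu']
    set w' : ℕ → X := fun i =>
      if h : i < u'.length then u'.get ⟨i, h⟩ else Classical.arbitrary X with hw'
    have hw'C : w' ∈ Cyl u' := by
      intro i hi
      simp only [hw', dif_pos hi]
    have hw'O : w' ∈ O := Hcyl u' (happ _) hw'C
    have hagree : ∀ i ∈ I, w' i = w i := by
      intro i hi
      have hin2 : i < n := hIlt i hi
      have hin : i < u'.length := by
        rw [hlen]; omega
      have hinl : i < ((List.range n).map w).length := by simpa using hin2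
      simp only [hw', dif_pos hin]
      show (List.map w (List.range n) ++ u₀).get ⟨i, hin⟩ = w i
      rw [List.get_eq_getElem, List.getElem_append_left hinl]
      simp
    refine ⟨w', h2 ?_, hw'O⟩
    rw [Set.mem_pi]
    intro i hi
    rw [hagree i hi]
    exact (h1 i hi).2
  -- measure
  have hμuniv : μ Set.univ = 1 := by
    have h : Cyl ([] : List X) = Set.univ := by
      ext w; simp [Cyl]
    rw [← h, hμ]; simp
  set L := u₀.length with hL
  set u₀f : Fin L → X := fun i => u₀.get i with hu₀f
  set W : (Fin L → X) → ℝ≥0∞ := fun h => ∏ i, p (h i) with hW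
  have hWtot : ∑ h : Fin L → X, W h = 1 := by
    rw [hW, ← Fintype.prod_sum (fun (_ : Fin L) (x : X) => p x)]
    simp [hp1]
  set φf : (Fin L → X) → ℝ≥0∞ := fun h => if h ≠ u₀f then W h else 0 with hφf
  set r : ℝ≥0∞ := ∑ h : Fin L → X, φf h with hr
  have hq0 : W u₀f ≠ 0 := by
    rw [hW]
    exact Finset.prod_ne_zero_iff.2 fun i _ => hp _
  have hsplit : W u₀f + r = 1 := by
    rw [hr, hφf]
    rw [← Finset.sum_filter, Finset.filter_ne', Finset.add_sum_erase _ W (Finset.mem_univ u₀f)]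
    exact hWtot
  have hrle : r ≤ 1 := by
    rw [← hsplit]; exact le_add_self
  have hrne : r ≠ 1 := by
    intro h
    apply hq0
    rw [h] at hsplit
    have h1 : W u₀f + 1 = 0 + 1 := by simpa using hsplit
    exact (ENNReal.add_left_inj (by simp)).1 h1
  have hrlt : r < 1 := lt_of_le_of_ne hrle hrne
  have hcov : ∀ n : ℕ, μ Oᶜ ≤ r ^ n := by
    intro n
    set T : (Fin n → Fin L → X) → Set (ℕ → X) := fun g =>
      if ∀ j, g j ≠ u₀f then
        Cyl ((List.ofFn fun j => List.ofFn fun i => g j i).flatten) else ∅ with hTdef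
    have hTsub : Oᶜ ⊆ ⋃ g : Fin n → Fin L → X, T g := by
      intro w hw
      set g : Fin n → Fin L → X := fun j i => w ((j : ℕ) * L + (i : ℕ)) with hg
      have hgj : ∀ j, g j ≠ u₀f := by
        intro j hj
        apply hw
        apply Hcyl ((List.range ((j : ℕ) * L)).map w ++ u₀) (happ _)
        intro i hi
        have hilen : i < (j : ℕ) * L + L := by
          simpa [hL] using hi
        rw [List.get_eq_getElem]
        rcases lt_or_ge i ((j : ℕ) * L) with hlt | hge
        · rw [List.getElem_append_left (by simpa using hlt)]
          simp [List.getElem_map, List.getElem_range]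
        · have hgelen : ((List.range ((j : ℕ) * L)).map w).length ≤ i := by simpa using hge
          rw [List.getElem_append_right hgelen]
          simp only [List.length_map, List.length_range]
          have hiL : i - (j : ℕ) * L < L := by omega
          have h7 := congrFun hj ⟨i - (j : ℕ) * L, hiL⟩
          simp only [hg, hu₀f] at h7
          have h8 : (j : ℕ) * L + (i - (j : ℕ) * L) = i := by omega
          rw [h8] at h7
          rw [h7]
          simp [List.get_eq_getElem]
      refine Set.mem_iUnion.2 ⟨g, ?_⟩
      rw [hTdef]
      simp only [if_pos hgj]
      have hfl := flatten_ofFn_blocks L n w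
      show w ∈ Cyl ((List.ofFn fun j => List.ofFn fun i => g j i).flatten)
      rw [hg]
      rw [hfl]
      intro i hi
      simp
    have hμT : ∀ g : Fin n → Fin L → X, μ (T g) = ∏ j, φf (g j) := by
      intro g
      by_cases hc : ∀ j, g j ≠ u₀f
      · rw [hTdef]
        simp only [if_pos hc]
        rw [hμ, prod_map_flatten]
        refine Finset.prod_congr rfl fun j _ => ?_
        rw [hφf]
        simp only [if_pos (hc j), hW]
      · push_neg at hc
        obtain ⟨j, hj⟩ := hc
        rw [hTdef]
        have hneg : ¬ ∀ j, g j ≠ u₀f := fun hall => hall j hj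
        simp only [if_neg hneg]
        rw [measure_empty]
        refine (Finset.prod_eq_zero (Finset.mem_univ j) ?_).symm
        rw [hφf]
        simp [hj]
    calc μ Oᶜ ≤ μ (⋃ g : Fin n → Fin L → X, T g) := measure_mono hTsub
      _ ≤ ∑' g : Fin n → Fin L → X, μ (T g) := measure_iUnion_le _
      _ = ∑ g : Fin n → Fin L → X, μ (T g) := tsum_fintype _
      _ = ∑ g : Fin n → Fin L → X, ∏ j, φf (g j) :=
          Finset.sum_congr rfl fun g _ => hμT g
      _ = ∏ _j : Fin n, ∑ h : Fin L → X, φf h :=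
          (Fintype.prod_sum fun (_ : Fin n) (h : Fin L → X) => φf h).symm
      _ = r ^ n := by rw [← hr]; simp
  have hOc : μ Oᶜ = 0 := by
    refine le_antisymm ?_ (zero_le)
    exact ge_of_tendsto' (ENNReal.tendsto_pow_atTop_nhds_zero_of_lt_one hrlt) hcov
  have h1le : (1 : ℝ≥0∞) ≤ μ O := by
    have hun := measure_union_le (μ := μ) O Oᶜ
    rw [Set.union_compl_self, hμuniv, hOc, add_zero] at hun
    exact hun
  have hle1 : μ O ≤ 1 := hμuniv ▸ measure_mono (Set.subset_univ O)
  exact ⟨hOopen, hOdense, le_antisymm hle1 h1le⟩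
end

section
/- For a finite labeled graph Γ over a finite alphabet X and the uniform Bernoulli measure μ_u, all the measures μ_u(B_v), μ_u(F_v) for vertices v, as well as Σ_v μ_u(F_v), are rational numbers. -/
open MeasureTheory ENNReal

set_option linter.unusedSectionVars false
set_option maxHeartbeats 1000000

section Comb

open Classical in
noncomputable def stp {V X : Type*} [Fintype V] (E : V → X → V → Prop)
    (S : Finset V) (x : X) : Finset V :=
  Finset.univ.filter (fun u => ∃ v ∈ S, E v x u)

noncomputable def reach {V X : Type*} [Fintype V] (E : V → X → V → Prop)
    (S : Finset V) (u : List X) : Finset V :=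
  u.foldl (stp E) S

variable {V X : Type*} [Fintype V] [Fintype X] (E : V → X → V → Prop)

lemma mem_stp {S : Finset V} {x : X} {u : V} :
    u ∈ stp E S x ↔ ∃ v ∈ S, E v x u := by
  classical
  simp [stp]

lemma reach_nil (S : Finset V) : reach E S [] = S := rfl

lemma reach_cons (S : Finset V) (x : X) (t : List X) :
    reach E S (x :: t) = reach E (stp E S x) t := rfl

lemma stp_empty (x : X) : stp E ∅ x = ∅ := by
  ext u; simp [mem_stp]

lemma reach_empty (u : List X) : reach E ∅ u = ∅ := by
  induction u with
  | nil => rfl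
  | cons x t ih => rw [reach_cons, stp_empty]; exact ih

/-- readable words of length `n` from `S`. -/
noncomputable def Nn (n : ℕ) (S : Finset V) : ℕ :=
  Fintype.card {c : Fin n → X // (reach E S (List.ofFn c)).Nonempty}

lemma Nn_zero_nonempty {S : Finset V} (h : S.Nonempty) : Nn E 0 S = 1 := by
  classical
  rw [Nn]
  rw [Fintype.card_eq_one_iff]
  refine ⟨⟨fun i => i.elim0, by simpa [reach_nil] using h⟩, ?_⟩
  rintro ⟨c, hc⟩
  ext i
  exact i.elim0

lemma Nn_empty (n : ℕ) : Nn E n (∅ : Finset V) = 0 := by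
  classical
  rw [Nn, Fintype.card_eq_zero_iff]
  refine ⟨fun ⟨c, hc⟩ => ?_⟩
  rw [reach_empty] at hc
  simp at hc

lemma Nn_succ (n : ℕ) (S : Finset V) :
    Nn E (n + 1) S = ∑ x : X, Nn E n (stp E S x) := by
  classical
  simp only [Nn]
  rw [← Fintype.card_sigma]
  refine Fintype.card_congr ?_
  refine
    { toFun := fun c => ⟨c.1 0, ⟨Fin.tail c.1, ?_⟩⟩
      invFun := fun p => ⟨Fin.cons p.1 p.2.1, ?_⟩
      left_inv := ?_
      right_inv := ?_ }
  · have := c.2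
    rwa [List.ofFn_succ, reach_cons] at this
  · have := p.2.2
    rw [List.ofFn_succ, reach_cons]
    simpa [Fin.tail_cons] using this
  · rintro ⟨c, hc⟩
    simp [Fin.cons_self_tail]
  · rintro ⟨x, ⟨t, ht⟩⟩
    simp [Fin.tail_cons]
    exact HEq.rfl

lemma Nn_le (n : ℕ) (S : Finset V) : Nn E n S ≤ Fintype.card X ^ n := by
  classical
  calc Nn E n S ≤ Fintype.card (Fin n → X) := Fintype.card_subtype_le _
  _ = Fintype.card X ^ n := by simp [Fintype.card_fun]

end Comb

section Alg

variable {V X : Type*} [Fintype V] [Fintype X] [Nonempty X] (E : V → X → V → Prop)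
variable (𝕜 : Type*) [Field 𝕜] [LinearOrder 𝕜] [IsStrictOrderedRing 𝕜]

/-- The transfer operator on functions `Finset V → 𝕜`. -/
noncomputable def Tmap : (Finset V → 𝕜) →ₗ[𝕜] (Finset V → 𝕜) where
  toFun f := fun S => (∑ x : X, f (stp E S x)) / (Fintype.card X : 𝕜)
  map_add' f g := by
    funext S
    simp [Finset.sum_add_distrib, add_div]
  map_smul' c f := by
    funext S
    simp only [smul_eq_mul, Pi.smul_apply, ← Finset.mul_sum, mul_div_assoc, RingHom.id_apply]

lemma cardX_pos : (0 : 𝕜) < (Fintype.card X : 𝕜) := by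
  exact_mod_cast Fintype.card_pos

lemma Tmap_bound (f : Finset V → 𝕜) (C : 𝕜) (hC : ∀ S, |f S| ≤ C) (S : Finset V) :
    |Tmap E 𝕜 f S| ≤ C := by
  have hd : (0:𝕜) < (Fintype.card X : 𝕜) := by exact_mod_cast Fintype.card_pos
  have : |∑ x : X, f (stp E S x)| ≤ ∑ x : X, C := by
    refine (Finset.abs_sum_le_sum_abs _ _).trans ?_
    exact Finset.sum_le_sum fun x _ => hC _
  have h2 : |∑ x : X, f (stp E S x)| ≤ (Fintype.card X : 𝕜) * C := by
    simpa [Finset.sum_const, nsmul_eq_mul, Finset.card_univ] using this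
  show |(∑ x : X, f (stp E S x)) / (Fintype.card X : 𝕜)| ≤ C
  rw [abs_div, abs_of_pos hd, div_le_iff₀ hd]
  linarith [h2]

lemma Tmap_disjoint [Archimedean 𝕜] :
    Disjoint (LinearMap.ker (LinearMap.id - Tmap E 𝕜))
      (LinearMap.range (LinearMap.id - Tmap E 𝕜)) := by
  rw [Submodule.disjoint_def]
  rintro v hv ⟨w, hw⟩
  simp only [LinearMap.mem_ker, LinearMap.sub_apply, LinearMap.id_apply, sub_eq_zero] at hv
  -- hv : v = Tmap E 𝕜 v
  have hTw : Tmap E 𝕜 w = w - v := by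
    have : w - Tmap E 𝕜 w = v := hw
    linear_combination (norm := abel) -this
  have hfix : ∀ n : ℕ, ((Tmap E 𝕜) ^ n) v = v := by
    intro n
    induction n with
    | zero => rfl
    | succ n ih => rw [pow_succ, Module.End.mul_apply, ← hv, ih]
  have hiter : ∀ n : ℕ, ((Tmap E 𝕜) ^ n) w = w - (n : 𝕜) • v := by
    intro n
    induction n with
    | zero => simp
    | succ n ih =>
      rw [pow_succ, Module.End.mul_apply, hTw, map_sub, ih, hfix]
      push_cast
      rw [add_smul, one_smul]
      abel
  have hne : (Finset.univ : Finset (Finset V)).Nonempty := Finset.univ_nonempty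
  set C := Finset.univ.sup' hne (fun S => |w S|) with hCdef
  have hCb : ∀ S, |w S| ≤ C := fun S => Finset.le_sup' (fun S => |w S|) (Finset.mem_univ S)
  have hbd : ∀ n : ℕ, ∀ S, |(((Tmap E 𝕜) ^ n) w) S| ≤ C := by
    intro n
    induction n with
    | zero => simpa using hCb
    | succ n ih =>
      intro S
      rw [pow_succ', Module.End.mul_apply]
      exact Tmap_bound E 𝕜 _ C ih S
  funext S
  by_contra hvS
  have hvS' : 0 < |v S| := abs_pos.mpr (by simpa using hvS)
  obtain ⟨n, hn⟩ := exists_nat_gt ((C + |w S|) / |v S|)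
  have hn' : C + |w S| < (n : 𝕜) * |v S| := by
    rwa [div_lt_iff₀ hvS'] at hn
  have h1 : |w S - (n : 𝕜) * v S| ≤ C := by
    have := hbd n S
    rw [hiter n] at this
    simpa [smul_eq_mul] using this
  have h2 : (n : 𝕜) * |v S| - |w S| ≤ |w S - (n : 𝕜) * v S| := by
    have := abs_sub_abs_le_abs_sub ((n : 𝕜) * v S) (w S)
    rw [abs_mul, abs_of_nonneg (by positivity : (0:𝕜) ≤ (n:𝕜))] at this
    calc (n : 𝕜) * |v S| - |w S| ≤ |(n:𝕜) * v S - w S| := this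
    _ = |w S - (n : 𝕜) * v S| := abs_sub_comm _ _
  linarith

lemma Tmap_compl :
    (LinearMap.ker (LinearMap.id - Tmap E ℚ)) ⊔
      (LinearMap.range (LinearMap.id - Tmap E ℚ)) = ⊤ := by
  have hdisj := Tmap_disjoint E ℚ
  set D := LinearMap.id - Tmap E ℚ with hD
  apply Submodule.eq_top_of_finrank_eq
  have h1 := Submodule.finrank_sup_add_finrank_inf_eq (LinearMap.ker D) (LinearMap.range D)
  rw [disjoint_iff.mp hdisj] at h1
  have h2 := LinearMap.finrank_range_add_finrank_ker D
  rw [finrank_bot ℚ (Finset V → ℚ), add_zero] at h1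
  omega

end Alg

section Qfun

variable {V X : Type*} [Fintype V] [Fintype X] [Nonempty X] (E : V → X → V → Prop)

noncomputable def qfun (n : ℕ) : Finset V → ℚ :=
  fun S => (Nn E n S : ℚ) / (Fintype.card X : ℚ) ^ n

lemma cardX_posQ : (0 : ℚ) < (Fintype.card X : ℚ) := by exact_mod_cast Fintype.card_pos

lemma qfun_succ (n : ℕ) : qfun E (n + 1) = Tmap E ℚ (qfun E n) := by
  funext S
  show _ = (∑ x : X, qfun E n (stp E S x)) / (Fintype.card X : ℚ)
  simp only [qfun, Nn_succ]
  push_cast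
  rw [Finset.sum_div, pow_succ, Finset.sum_div]
  congr 1
  funext x
  rw [div_div]

lemma qfun_nonneg (n : ℕ) (S : Finset V) : 0 ≤ qfun E n S := by
  have := cardX_posQ (X := X)
  rw [qfun]
  positivity

lemma qfun_le_one (n : ℕ) (S : Finset V) : qfun E n S ≤ 1 := by
  have hd : (0:ℚ) < (Fintype.card X : ℚ) ^ n := pow_pos (cardX_posQ (X := X)) n
  rw [qfun, div_le_one hd]
  exact_mod_cast Nn_le E n S

lemma qfun_empty (n : ℕ) : qfun E n (∅ : Finset V) = 0 := by
  rw [qfun, Nn_empty]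
  simp

lemma qfun_succ_le (n : ℕ) (S : Finset V) : qfun E (n + 1) S ≤ qfun E n S := by
  induction n generalizing S with
  | zero =>
    rcases S.eq_empty_or_nonempty with rfl | hS
    · rw [qfun_succ]
      show (∑ x : X, qfun E 0 (stp E ∅ x)) / (Fintype.card X : ℚ) ≤ _
      simp [stp_empty, qfun_empty]
    · refine (qfun_le_one E 1 S).trans ?_
      rw [qfun, Nn_zero_nonempty E hS]
      simp
  | succ n ih =>
    have h1 := congrFun (qfun_succ E (n+1)) S
    have h2 := congrFun (qfun_succ E n) S
    rw [h1, h2]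
    show (∑ x : X, qfun E (n+1) (stp E S x)) / (Fintype.card X : ℚ) ≤
      (∑ x : X, qfun E n (stp E S x)) / (Fintype.card X : ℚ)
    have := cardX_posQ (X := X)
    gcongr with x _
    exact ih _

lemma qfun_antitone (S : Finset V) : Antitone (fun n => qfun E n S) :=
  antitone_nat_of_succ_le (fun n => qfun_succ_le E n S)

lemma qfun_sub_mem (n : ℕ) :
    qfun E 0 - qfun E n ∈ LinearMap.range (LinearMap.id - Tmap E ℚ) := by
  induction n with
  | zero =>
    rw [sub_self]
    exact Submodule.zero_mem _
  | succ n ih =>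
    have h : qfun E 0 - qfun E (n+1) =
        (qfun E 0 - qfun E n) +
          ((LinearMap.id - Tmap E ℚ : (Finset V → ℚ) →ₗ[ℚ] (Finset V → ℚ)) (qfun E n)) := by
      rw [qfun_succ]
      simp only [LinearMap.sub_apply, LinearMap.id_apply]
      abel
    rw [h]
    exact Submodule.add_mem _ ih (LinearMap.mem_range_self _ _)

noncomputable def Lfun : Finset V → ℝ := fun S => ⨅ n : ℕ, ((qfun E n S : ℚ) : ℝ)

lemma Lfun_tendsto :
    Filter.Tendsto (fun n => (fun S => ((qfun E n S : ℚ) : ℝ))) Filter.atTop (nhds (Lfun E)) := by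
  rw [tendsto_pi_nhds]
  intro S
  apply tendsto_atTop_ciInf
  · intro m n hmn
    show ((qfun E n S : ℚ) : ℝ) ≤ ((qfun E m S : ℚ) : ℝ)
    exact_mod_cast qfun_antitone E S hmn
  · refine ⟨0, ?_⟩
    rintro x ⟨n, rfl⟩
    show (0:ℝ) ≤ ((qfun E n S : ℚ) : ℝ)
    exact_mod_cast qfun_nonneg E n S

lemma Lfun_nonneg (S : Finset V) : 0 ≤ Lfun E S :=
  le_ciInf fun n => by exact_mod_cast qfun_nonneg E n S

lemma Lfun_eq_iInf (S : Finset V) : Lfun E S = ⨅ n : ℕ, ((qfun E n S : ℚ) : ℝ) := rfl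

lemma Lfun_rat : ∃ k : Finset V → ℚ, ∀ S, Lfun E S = (k S : ℝ) := by
  have hsup := Tmap_compl E
  have hmem : qfun E 0 ∈ (LinearMap.ker (LinearMap.id - Tmap E ℚ)) ⊔
      (LinearMap.range (LinearMap.id - Tmap E ℚ)) := hsup ▸ Submodule.mem_top
  obtain ⟨k, hk, r, hr, hkr⟩ := Submodule.mem_sup.mp hmem
  refine ⟨k, ?_⟩
  set c : (Finset V → ℚ) → (Finset V → ℝ) := fun f S => ((f S : ℚ) : ℝ) with hc
  have hcT : ∀ f, Tmap E ℝ (c f) = c (Tmap E ℚ f) := by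
    intro f
    funext S
    show (∑ x : X, ((f (stp E S x) : ℚ) : ℝ)) / (Fintype.card X : ℝ)
      = (((∑ x : X, f (stp E S x)) / (Fintype.card X : ℚ) : ℚ) : ℝ)
    push_cast
    ring
  have hcsub : ∀ f g, c (f - g) = c f - c g := by
    intro f g; funext S; simp [hc]
  -- L is fixed by the real transfer operator
  have cont : Continuous (fun f : Finset V → ℝ => Tmap E ℝ f) := by
    change Continuous (fun (f : Finset V → ℝ) (S : Finset V) =>
      (∑ x : X, f (stp E S x)) / (Fintype.card X : ℝ))
    exact continuous_pi fun S =>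
      (continuous_finset_sum _ fun x _ => continuous_apply (stp E S x)).div_const _
  have key := Lfun_tendsto E
  have h1 : Filter.Tendsto (fun n => Tmap E ℝ (c (qfun E n))) Filter.atTop
      (nhds (Tmap E ℝ (Lfun E))) := (cont.tendsto _).comp key
  have h2 : (fun n => Tmap E ℝ (c (qfun E n))) = fun n => c (qfun E (n + 1)) := by
    funext n; rw [hcT, qfun_succ]
  have h3 : Filter.Tendsto (fun n => c (qfun E (n + 1))) Filter.atTop (nhds (Lfun E)) :=
    key.comp (Filter.tendsto_add_atTop_nat 1)
  have hTL : Tmap E ℝ (Lfun E) = Lfun E := by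
    refine tendsto_nhds_unique ?_ h3
    rwa [h2] at h1
  -- the limit defect lies in the range of id - T over ℝ
  set Rr := LinearMap.range (LinearMap.id - Tmap E ℝ) with hRr
  have hclosed : IsClosed (Rr : Set (Finset V → ℝ)) := Rr.closed_of_finiteDimensional
  have hcR : ∀ f, f ∈ LinearMap.range (LinearMap.id - Tmap E ℚ) → c f ∈ Rr := by
    rintro f ⟨g, rfl⟩
    refine ⟨c g, ?_⟩
    simp only [LinearMap.sub_apply, LinearMap.id_apply, hcT, hcsub]
  have hsubmem : c (qfun E 0) - Lfun E ∈ Rr := by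
    refine hclosed.mem_of_tendsto (tendsto_const_nhds.sub key) ?_
    filter_upwards with n
    have : c (qfun E 0) - c (qfun E n) = c (qfun E 0 - qfun E n) := (hcsub _ _).symm
    rw [this]
    exact hcR _ (qfun_sub_mem E n)
  -- c k - L is in ker ∩ range, hence zero
  have hkk : Tmap E ℚ k = k := by
    have h0 := LinearMap.mem_ker.mp hk
    rw [LinearMap.sub_apply, LinearMap.id_apply, sub_eq_zero] at h0
    exact h0.symm
  have hkker : c k ∈ LinearMap.ker (LinearMap.id - Tmap E ℝ) := by
    rw [LinearMap.mem_ker, LinearMap.sub_apply, LinearMap.id_apply, hcT, hkk, sub_self]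
  have hLker : Lfun E ∈ LinearMap.ker (LinearMap.id - Tmap E ℝ) := by
    rw [LinearMap.mem_ker, LinearMap.sub_apply, LinearMap.id_apply, hTL, sub_self]
  have hdiff_range : c k - Lfun E ∈ Rr := by
    have hck : c k = c (qfun E 0) - c r := by
      rw [← hcsub, ← hkr, add_sub_cancel_right]
    rw [hck]
    have hcr : c r ∈ Rr := hcR _ hr
    have := Submodule.sub_mem Rr hsubmem hcr
    convert this using 1
    abel
  have hdiff_ker : c k - Lfun E ∈ LinearMap.ker (LinearMap.id - Tmap E ℝ) :=
    Submodule.sub_mem _ hkker hLker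
  have hzero : c k - Lfun E = 0 :=
    Submodule.disjoint_def.mp (Tmap_disjoint E ℝ) _ hdiff_ker hdiff_range
  intro S
  have h2 : c k S - Lfun E S = 0 := congrFun hzero S
  exact (sub_eq_zero.mp h2).symm

end Qfun

section Meas

variable {V X : Type*} [Fintype V] [Fintype X] [Nonempty X] (E : V → X → V → Prop)

/-- Readable words of length `n` from `S`, as a finset. -/
noncomputable def ANs (n : ℕ) (S : Finset V) : Finset (Fin n → X) :=
  Finset.univ.filter (fun c => (reach E S (List.ofFn c)).Nonempty)

lemma card_ANs (n : ℕ) (S : Finset V) : (ANs E n S).card = Nn E n S := by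
  classical
  rw [ANs, Nn, Fintype.card_subtype]

lemma mem_cyl_ofFn {n : ℕ} (c : Fin n → X) (w : ℕ → X) :
    w ∈ Cyl (List.ofFn c) ↔ ∀ i : Fin n, w i = c i := by
  constructor
  · intro h i
    have := h i (by simpa using i.isLt)
    simpa [List.get_ofFn] using this
  · intro h i hi
    have hi' : i < n := by simpa using hi
    have := h ⟨i, hi'⟩
    simpa [List.get_ofFn] using this

/-- The set of right-infinite sequences whose first `n` letters are readable from `S`. -/
def Un (n : ℕ) (S : Finset V) : Set (ℕ → X) :=
  {w | (reach E S (List.ofFn (fun i : Fin n => w i))).Nonempty}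

lemma Un_eq (n : ℕ) (S : Finset V) :
    Un E n S = ⋃ c ∈ ANs E n S, Cyl (List.ofFn c) := by
  ext w
  simp only [Un, Set.mem_setOf_eq, Set.mem_iUnion, ANs, Finset.mem_filter, Finset.mem_univ,
    true_and, exists_prop]
  constructor
  · intro h
    exact ⟨fun i => w i, h, (mem_cyl_ofFn _ w).mpr fun i => rfl⟩
  · rintro ⟨c, hc, hw⟩
    have : (fun i : Fin n => w i) = c := funext fun i => (mem_cyl_ofFn c w).mp hw i
    rwa [this]

noncomputable def ANsc (n : ℕ) (S : Finset V) : Finset (Fin n → X) :=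
  Finset.univ.filter (fun c => ¬ (reach E S (List.ofFn c)).Nonempty)

lemma card_ANs_add_card_ANsc (n : ℕ) (S : Finset V) :
    (ANs E n S).card + (ANsc E n S).card = Fintype.card X ^ n := by
  rw [ANs, ANsc, Finset.card_filter_add_card_filter_not]
  simp [Fintype.card_fun]

lemma Un_compl_eq (n : ℕ) (S : Finset V) :
    (Un E n S)ᶜ = ⋃ c ∈ ANsc E n S, Cyl (List.ofFn c) := by
  ext w
  simp only [Set.mem_compl_iff, Un, Set.mem_setOf_eq, Set.mem_iUnion, ANsc,
    Finset.mem_filter, Finset.mem_univ, true_and, exists_prop]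
  constructor
  · intro h
    exact ⟨fun i => w i, h, (mem_cyl_ofFn _ w).mpr fun i => rfl⟩
  · rintro ⟨c, hc, hw⟩
    have : (fun i : Fin n => w i) = c := funext fun i => (mem_cyl_ofFn c w).mp hw i
    rw [this]
    exact hc

lemma reach_append_singleton (S : Finset V) (u : List X) (x : X) :
    reach E S (u ++ [x]) = stp E (reach E S u) x := by
  rw [reach, List.foldl_append]
  rfl

lemma Un_succ_subset (n : ℕ) (S : Finset V) : Un E (n + 1) S ⊆ Un E n S := by
  intro w hw
  have h : (reach E S (List.ofFn (fun i : Fin (n+1) => w i))).Nonempty := hw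
  rw [List.ofFn_succ', List.concat_eq_append, reach_append_singleton] at h
  have heq : (fun i : Fin n => w ((Fin.castSucc i) : ℕ)) = fun i : Fin n => w i := by
    funext i; simp
  show (reach E S (List.ofFn (fun i : Fin n => w i))).Nonempty
  rw [← heq]
  rcases (reach E S (List.ofFn (fun i : Fin n => w ((Fin.castSucc i) : ℕ)))).eq_empty_or_nonempty
    with he | hne
  · exfalso
    rw [he, stp_empty] at h
    exact h.ne_empty rfl
  · exact hne

lemma Un_antitone (S : Finset V) : Antitone (fun n => Un E n S) :=
  antitone_nat_of_succ_le (fun n => Un_succ_subset E n S)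

variable [MeasurableSpace X] (μ : Measure (ℕ → X))
variable (hμ : ∀ u : List X, μ (Cyl u) = ((Fintype.card X : ℝ≥0∞))⁻¹ ^ u.length)

lemma Cyl_nil : Cyl ([] : List X) = (Set.univ : Set (ℕ → X)) := by
  ext w; simp [Cyl]

include hμ

lemma meas_univ : μ Set.univ = 1 := by
  have := hμ []
  rw [Cyl_nil] at this
  simpa using this

lemma meas_biUnion_cyl (n : ℕ) (A : Finset (Fin n → X)) :
    μ (⋃ c ∈ A, Cyl (List.ofFn c)) = (A.card : ℝ≥0∞) * ((Fintype.card X : ℝ≥0∞))⁻¹ ^ n := by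
  classical
  set p : ℝ≥0∞ := ((Fintype.card X : ℝ≥0∞))⁻¹ with hp
  have hcyl : ∀ c : Fin n → X, μ (Cyl (List.ofFn c)) = p ^ n := by
    intro c
    rw [hμ]
    simp
  have hub : ∀ B : Finset (Fin n → X), μ (⋃ c ∈ B, Cyl (List.ofFn c)) ≤ (B.card : ℝ≥0∞) * p ^ n := by
    intro B
    calc μ (⋃ c ∈ B, Cyl (List.ofFn c)) ≤ ∑ c ∈ B, μ (Cyl (List.ofFn c)) :=
      measure_biUnion_finset_le B _
    _ = (B.card : ℝ≥0∞) * p ^ n := by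
      rw [Finset.sum_congr rfl fun c _ => hcyl c, Finset.sum_const, nsmul_eq_mul]
  have hdp : (Fintype.card X : ℝ≥0∞) ≠ 0 := by
    simp [Fintype.card_ne_zero]
  have hdt : (Fintype.card X : ℝ≥0∞) ≠ ⊤ := by simp
  have hsum : (A.card : ℝ≥0∞) * p ^ n + ((Aᶜ).card : ℝ≥0∞) * p ^ n = 1 := by
    rw [← add_mul, ← Nat.cast_add, Finset.card_add_card_compl, Fintype.card_fun,
      Fintype.card_fin, Nat.cast_pow, hp, ← mul_pow, ENNReal.mul_inv_cancel hdp hdt, one_pow]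
  have hcover : (Set.univ : Set (ℕ → X)) ⊆ (⋃ c ∈ A, Cyl (List.ofFn c)) ∪ (⋃ c ∈ Aᶜ, Cyl (List.ofFn c)) := by
    intro w _
    by_cases hA : (fun i : Fin n => w i) ∈ A
    · left
      exact Set.mem_biUnion hA ((mem_cyl_ofFn _ w).mpr fun i => rfl)
    · right
      exact Set.mem_biUnion (Finset.mem_compl.mpr hA) ((mem_cyl_ofFn _ w).mpr fun i => rfl)
  have hlb : (A.card : ℝ≥0∞) * p ^ n ≤ μ (⋃ c ∈ A, Cyl (List.ofFn c)) := by
    have h1 : (1 : ℝ≥0∞) ≤ μ (⋃ c ∈ A, Cyl (List.ofFn c)) + ((Aᶜ).card : ℝ≥0∞) * p ^ n := by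
      calc (1:ℝ≥0∞) = μ Set.univ := (meas_univ μ hμ).symm
      _ ≤ μ ((⋃ c ∈ A, Cyl (List.ofFn c)) ∪ (⋃ c ∈ Aᶜ, Cyl (List.ofFn c))) :=
        measure_mono hcover
      _ ≤ μ (⋃ c ∈ A, Cyl (List.ofFn c)) + μ (⋃ c ∈ Aᶜ, Cyl (List.ofFn c)) := measure_union_le _ _
      _ ≤ _ := by gcongr; exact hub _
    have hb_ne : ((Aᶜ).card : ℝ≥0∞) * p ^ n ≠ ⊤ := by
      refine ENNReal.mul_ne_top (by simp) ?_
      exact ENNReal.pow_ne_top (by simp [hp])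
    have ha_eq : (A.card : ℝ≥0∞) * p ^ n = 1 - ((Aᶜ).card : ℝ≥0∞) * p ^ n :=
      ENNReal.eq_sub_of_add_eq hb_ne hsum
    rw [ha_eq]
    exact tsub_le_iff_right.mpr h1
  exact le_antisymm (hub A) hlb

lemma meas_Un (n : ℕ) (S : Finset V) :
    μ (Un E n S) = (Nn E n S : ℝ≥0∞) * ((Fintype.card X : ℝ≥0∞))⁻¹ ^ n := by
  rw [Un_eq, meas_biUnion_cyl μ hμ, card_ANs]

lemma meas_Un_compl (n : ℕ) (S : Finset V) :
    μ ((Un E n S)ᶜ) = 1 - μ (Un E n S) := by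
  rw [Un_compl_eq, meas_biUnion_cyl μ hμ, meas_Un E μ hμ]
  have hdp : (Fintype.card X : ℝ≥0∞) ≠ 0 := by simp [Fintype.card_ne_zero]
  have hdt : (Fintype.card X : ℝ≥0∞) ≠ ⊤ := by simp
  have hsum : (Nn E n S : ℝ≥0∞) * ((Fintype.card X : ℝ≥0∞))⁻¹ ^ n
      + ((ANsc E n S).card : ℝ≥0∞) * ((Fintype.card X : ℝ≥0∞))⁻¹ ^ n = 1 := by
    rw [← card_ANs E n S, ← add_mul, ← Nat.cast_add, card_ANs_add_card_ANsc, Nat.cast_pow,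
      ← mul_pow, ENNReal.mul_inv_cancel hdp hdt, one_pow]
  have hne : (Nn E n S : ℝ≥0∞) * ((Fintype.card X : ℝ≥0∞))⁻¹ ^ n ≠ ⊤ := by
    refine ENNReal.mul_ne_top (by simp) (ENNReal.pow_ne_top (by simp))
  rw [eq_comm]
  rw [add_comm] at hsum
  rw [← card_ANs E n S] at hne hsum ⊢
  exact (ENNReal.eq_sub_of_add_eq hne hsum).symm

end Meas

section Meas2

variable {V X : Type*} [Fintype V] [Fintype X] [Nonempty X] (E : V → X → V → Prop)
variable [MeasurableSpace X] (μ : Measure (ℕ → X))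
variable (hμ : ∀ u : List X, μ (Cyl u) = ((Fintype.card X : ℝ≥0∞))⁻¹ ^ u.length)

include hμ in
lemma meas_Un_ofReal (n : ℕ) (S : Finset V) :
    μ (Un E n S) = ENNReal.ofReal ((qfun E n S : ℚ) : ℝ) := by
  have hq : ((qfun E n S : ℚ) : ℝ) = (Nn E n S : ℝ) * ((Fintype.card X : ℝ) ^ n)⁻¹ := by
    rw [qfun]
    push_cast
    rw [div_eq_mul_inv]
  have hcast : (0:ℝ) < (Fintype.card X : ℝ) ^ n :=
    pow_pos (by exact_mod_cast Fintype.card_pos) n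
  rw [meas_Un E μ hμ, hq, ENNReal.ofReal_mul (Nat.cast_nonneg _), ENNReal.ofReal_natCast,
    ENNReal.ofReal_inv_of_pos hcast, ENNReal.ofReal_pow (Nat.cast_nonneg _),
    ENNReal.ofReal_natCast, ENNReal.inv_pow]

include hμ in
lemma meas_iInter_Un (S : Finset V) :
    μ (⋂ n, Un E n S) = ENNReal.ofReal (Lfun E S) := by
  set a : ℕ → ℝ≥0∞ := fun n => μ (Un E n S) with hadef
  have haanti : Antitone a := fun m n h => measure_mono (Un_antitone E S h)
  have hupper : μ (⋂ n, Un E n S) ≤ ⨅ n, a n :=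
    le_iInf fun n => measure_mono (Set.iInter_subset _ n)
  have hle1 : ∀ n, a n ≤ 1 := by
    intro n
    rw [← meas_univ μ hμ]
    exact measure_mono (Set.subset_univ _)
  have hinfle1 : ⨅ n, a n ≤ 1 := (iInf_le _ 0).trans (hle1 0)
  have hsupc : μ ((⋂ n, Un E n S)ᶜ) = 1 - ⨅ n, a n := by
    rw [Set.compl_iInter]
    have hdir : Directed (· ⊆ ·) (fun n => (Un E n S)ᶜ) := by
      have hmono : Monotone (fun n => (Un E n S)ᶜ) := fun m n h =>
        Set.compl_subset_compl.mpr (Un_antitone E S h)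
      exact hmono.directed_le
    rw [hdir.measure_iUnion]
    have : ∀ n, μ ((Un E n S)ᶜ) = 1 - a n := fun n => meas_Un_compl E μ hμ n S
    simp_rw [this]
    exact ENNReal.sub_iInf.symm
  have hlower : ⨅ n, a n ≤ μ (⋂ n, Un E n S) := by
    have h1 : (1 : ℝ≥0∞) ≤ μ (⋂ n, Un E n S) + (1 - ⨅ n, a n) := by
      rw [← hsupc]
      calc (1:ℝ≥0∞) = μ Set.univ := (meas_univ μ hμ).symm
      _ = μ ((⋂ n, Un E n S) ∪ (⋂ n, Un E n S)ᶜ) := by rw [Set.union_compl_self]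
      _ ≤ _ := measure_union_le _ _
    calc ⨅ n, a n = 1 - (1 - ⨅ n, a n) := (ENNReal.sub_sub_cancel ENNReal.one_ne_top hinfle1).symm
    _ ≤ μ (⋂ n, Un E n S) := tsub_le_iff_right.mpr h1
  have hmain : μ (⋂ n, Un E n S) = ⨅ n, a n := le_antisymm hupper hlower
  rw [hmain]
  have h2 : Filter.Tendsto a Filter.atTop (nhds (⨅ n, a n)) := tendsto_atTop_iInf haanti
  have hq : ∀ n, a n = ENNReal.ofReal ((qfun E n S : ℚ) : ℝ) := fun n =>
    meas_Un_ofReal E μ hμ n S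
  have hqt : Filter.Tendsto (fun n : ℕ => ((qfun E n S : ℚ) : ℝ)) Filter.atTop
      (nhds (Lfun E S)) := by
    have := Lfun_tendsto E
    rw [tendsto_pi_nhds] at this
    exact this S
  have h3 : Filter.Tendsto a Filter.atTop (nhds (ENNReal.ofReal (Lfun E S))) := by
    have hcomp := (ENNReal.continuous_ofReal.tendsto _).comp hqt
    have ha' : a = fun n => ENNReal.ofReal ((qfun E n S : ℚ) : ℝ) := funext hq
    rw [ha']
    exact hcomp
  exact tendsto_nhds_unique h2 h3

end Meas2

section Konig

variable {V X : Type*} [Fintype V] [Fintype X] [Nonempty X] (E : V → X → V → Prop)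

lemma path_mem_reach (u : List X) (S : Finset V) (p : ℕ → V) (h0 : p 0 ∈ S)
    (hp : ∀ i (h : i < u.length), E (p i) (u.get ⟨i, h⟩) (p (i + 1))) :
    p u.length ∈ reach E S u := by
  induction u generalizing S p with
  | nil => exact h0
  | cons x t ih =>
    have h1 : p 1 ∈ stp E S x := (mem_stp E).mpr ⟨p 0, h0, hp 0 (by simp)⟩
    have h2 : ∀ i (h : i < t.length), E (p (i+1)) (t.get ⟨i, h⟩) (p (i+2)) := by
      intro i h
      have := hp (i+1) (by simpa using Nat.succ_lt_succ h)
      simpa using this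
    have := ih (stp E S x) (fun i => p (i+1)) h1 h2
    exact this

lemma reach_mem_path (u : List X) (S : Finset V) (a : V) (ha : a ∈ reach E S u) :
    ∃ p : ℕ → V, p 0 ∈ S ∧ p u.length = a ∧
      ∀ i (h : i < u.length), E (p i) (u.get ⟨i, h⟩) (p (i + 1)) := by
  induction u generalizing S a with
  | nil => exact ⟨fun _ => a, ha, rfl, fun i h => absurd h (by simp)⟩
  | cons x t ih =>
    obtain ⟨q, hq0, hqlen, hq⟩ := ih (stp E S x) a ha
    obtain ⟨v0, hv0, hE⟩ := (mem_stp E).mp hq0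
    refine ⟨fun i => Nat.casesOn i v0 q, hv0, hqlen, ?_⟩
    intro i h
    cases i with
    | zero => exact hE
    | succ i =>
      have hi : i < t.length := by simpa using h
      have := hq i hi
      simpa using this

lemma startsInf_eq_iInter (v : V) :
    {w : ℕ → X | StartsInf E w v} = ⋂ n, Un E n ({v} : Finset V) := by
  ext w
  simp only [Set.mem_setOf_eq, Set.mem_iInter]
  constructor
  · rintro ⟨p, hp0, hp⟩ n
    have hedge : ∀ i (h : i < (List.ofFn (fun j : Fin n => w j)).length),
        E (p i) ((List.ofFn (fun j : Fin n => w j)).get ⟨i, h⟩) (p (i + 1)) := by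
      intro i h
      rw [List.get_ofFn]
      exact hp i
    exact ⟨_, path_mem_reach E _ _ p (Finset.mem_singleton.mpr hp0) hedge⟩
  · intro hw
    have hK : ∀ n : ℕ, ∃ p : ℕ → V, p 0 = v ∧ ∀ i < n, E (p i) (w i) (p (i + 1)) := by
      intro n
      obtain ⟨a, ha⟩ := hw n
      obtain ⟨p, hp0, _, hp⟩ := reach_mem_path E _ _ _ ha
      refine ⟨p, Finset.mem_singleton.mp hp0, ?_⟩
      intro i hi
      have hlen : i < (List.ofFn (fun j : Fin n => w j)).length := by simpa using hi
      have := hp i hlen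
      rwa [List.get_ofFn] at this
    letI : TopologicalSpace V := ⊥
    haveI : DiscreteTopology V := ⟨rfl⟩
    set K : ℕ → Set (ℕ → V) :=
      fun n => {p | p 0 = v ∧ ∀ i < n, E (p i) (w i) (p (i + 1))} with hKdef
    have hclosed : ∀ n, IsClosed (K n) := by
      intro n
      have hKn : K n = ((fun p : ℕ → V => p 0) ⁻¹' {v}) ∩
          ⋂ (i : ℕ), ⋂ (_ : i < n), ((fun p : ℕ → V => (p i, p (i + 1))) ⁻¹'
            {q : V × V | E q.1 (w i) q.2}) := by
        ext p
        simp [hKdef]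
      rw [hKn]
      refine IsClosed.inter (IsClosed.preimage (continuous_apply 0) (isClosed_discrete _)) ?_
      refine isClosed_iInter fun i => isClosed_iInter fun _ => ?_
      exact IsClosed.preimage ((continuous_apply i).prodMk (continuous_apply (i + 1)))
        (isClosed_discrete _)
    have hne : ∀ n, (K n).Nonempty := by
      intro n
      obtain ⟨p, h1, h2⟩ := hK n
      exact ⟨p, h1, h2⟩
    have hdec : ∀ n, K (n + 1) ⊆ K n := fun n p hp =>
      ⟨hp.1, fun i hi => hp.2 i (hi.trans (Nat.lt_succ_self n))⟩
    have hcpt : IsCompact (K 0) := (hclosed 0).isCompact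
    obtain ⟨p, hp⟩ :=
      IsCompact.nonempty_iInter_of_sequence_nonempty_isCompact_isClosed K hdec hne hcpt hclosed
    simp only [Set.mem_iInter] at hp
    exact ⟨p, (hp 0).1, fun i => (hp (i + 1)).2 i (Nat.lt_succ_self i)⟩

end Konig

/-- For a finite labeled graph and the uniform Bernoulli measure, all the measures `μ(B_v)`,
`μ(F_v)` and the sum `Σ_v μ(F_v)` are rational numbers. -/
theorem stmt_9 {V X : Type*} [Fintype V] [Fintype X] [Nonempty X] [MeasurableSpace X]
    (E : V → X → V → Prop)
    (μ : Measure (ℕ → X))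
    (hμ : ∀ u : List X, μ (Cyl u) = ((Fintype.card X : ℝ≥0∞))⁻¹ ^ u.length) :
    (∀ v : V, ∃ q : ℚ, 0 ≤ q ∧ μ {w | StartsInf E w v} = ENNReal.ofReal (q : ℝ)) ∧
    (∀ v : V, ∃ q : ℚ, 0 ≤ q ∧ μ {w | EndsInf E w v} = ENNReal.ofReal (q : ℝ)) ∧
    (∃ q : ℚ, 0 ≤ q ∧ ∑ v : V, μ {w | EndsInf E w v} = ENNReal.ofReal (q : ℝ)) := by
  classical
  have hstart : ∀ (E' : V → X → V → Prop) (v : V),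
      μ {w | StartsInf E' w v} = ENNReal.ofReal (Lfun E' ({v} : Finset V)) := by
    intro E' v
    rw [startsInf_eq_iInter E' v, meas_iInter_Un E' μ hμ]
  obtain ⟨k, hk⟩ := Lfun_rat E
  set E2 : V → X → V → Prop := fun a x b => E b x a with hE2
  obtain ⟨k2, hk2⟩ := Lfun_rat E2
  refine ⟨?_, ?_, ?_⟩
  · intro v
    refine ⟨k {v}, ?_, ?_⟩
    · have := Lfun_nonneg E ({v} : Finset V)
      rw [hk] at this
      exact_mod_cast this
    · rw [hstart E v, hk]
  · intro v
    refine ⟨k2 {v}, ?_, ?_⟩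
    · have := Lfun_nonneg E2 ({v} : Finset V)
      rw [hk2] at this
      exact_mod_cast this
    · have hset : {w : ℕ → X | EndsInf E w v} = {w | StartsInf E2 w v} := rfl
      rw [hset, hstart E2 v, hk2]
  · refine ⟨∑ v : V, k2 {v}, Finset.sum_nonneg fun v _ => ?_, ?_⟩
    · have := Lfun_nonneg E2 ({v} : Finset V)
      rw [hk2] at this
      exact_mod_cast this
    · have hone : ∀ v : V, μ {w | EndsInf E w v} = ENNReal.ofReal ((k2 {v} : ℚ) : ℝ) := by
        intro v
        have hset : {w : ℕ → X | EndsInf E w v} = {w | StartsInf E2 w v} := rfl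
        rw [hset, hstart E2 v, hk2]
      rw [Finset.sum_congr rfl fun v _ => hone v, ← ENNReal.ofReal_sum_of_nonneg]
      · congr 1
        push_cast
        rfl
      · intro v _
        have := Lfun_nonneg E2 ({v} : Finset V)
        rwa [hk2] at this
end
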